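/- arXiv:1412.4332 — 6 statements merged into one kernel-verified Lean document; each statement's English description precedes it below -/
import Mathlib

section
/- If x_1,…,x_N are positive real numbers with arithmetic mean x̄ = (1/N)Σ_k x_k, harmonic mean x_H defined by 1/x_H = (1/N)Σ_k 1/x_k, variance σ² = (1/N)Σ_k (x_k − x̄)², and x_k ≤ M for every k (with M > 0), then x̄ − x_H ≥ σ²/(2M). -/
/-- For positive reals `x 1, …, x N` with arithmetic mean `x̄`, harmonic mean `x_H`
(defined by `1/x_H = (1/N) ∑ 1/x k`), variance `σ²`, and `x k ≤ M` for all `k`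
with `M > 0`, one has `x̄ − x_H ≥ σ²/(2M)`. -/
theorem am_sub_hm_ge_variance_div (N : ℕ) (hN : 0 < N) (x : Fin N → ℝ)
    (hx : ∀ k, 0 < x k) (M : ℝ) (hM : 0 < M) (hxM : ∀ k, x k ≤ M)
    (xbar xH σ2 : ℝ)
    (hxbar : xbar = (1 / (N : ℝ)) * ∑ k, x k)
    (hxH : 1 / xH = (1 / (N : ℝ)) * ∑ k, 1 / x k)
    (hσ2 : σ2 = (1 / (N : ℝ)) * ∑ k, (x k - xbar) ^ 2) :
    xbar - xH ≥ σ2 / (2 * M) := by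
  have hn : (0:ℝ) < N := by exact_mod_cast hN
  have hne : Nonempty (Fin N) := ⟨⟨0, hN⟩⟩
  have hxbar_pos : 0 < xbar := by
    rw [hxbar]
    exact mul_pos (by positivity) (Finset.sum_pos (fun k _ => hx k) Finset.univ_nonempty)
  have hsum : ∑ k, x k = N * xbar := by
    rw [hxbar]; field_simp
  have hσsum : ∑ k, (x k - xbar) ^ 2 = N * σ2 := by
    rw [hσ2]; field_simp
  have hσ2_nonneg : 0 ≤ σ2 := by
    rw [hσ2]; positivity
  -- σ2 ≤ M * xbar
  have hsq : ∑ k, (x k) ^ 2 ≤ M * (N * xbar) := by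
    rw [← hsum, Finset.mul_sum]
    apply Finset.sum_le_sum
    intro k _
    have := hx k
    nlinarith [hxM k]
  have hexp : ∑ k, (x k - xbar) ^ 2
      = (∑ k, (x k) ^ 2) - 2 * xbar * (∑ k, x k) + N * xbar ^ 2 := by
    simp only [sub_sq]
    rw [Finset.sum_add_distrib, Finset.sum_sub_distrib,
      Finset.sum_const, Finset.card_univ, Fintype.card_fin]
    have h2s : ∑ k, 2 * x k * xbar = 2 * xbar * ∑ k, x k := by
      rw [Finset.mul_sum]; exact Finset.sum_congr rfl fun k _ => by ring
    rw [h2s]; ring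
  have hσ2M : σ2 ≤ M * xbar := by
    have h1 : (N:ℝ) * σ2 ≤ N * (M * xbar) := by
      rw [← hσsum, hexp, hsum]
      nlinarith [sq_nonneg xbar]
    exact le_of_mul_le_mul_left h1 hn
  -- pointwise key inequality
  have hkey : ∀ k, 2 / xbar - x k / xbar ^ 2 + (x k - xbar) ^ 2 / (M * xbar ^ 2)
      ≤ 1 / x k := by
    intro k
    have hxk := hx k
    have h2 : (x k - xbar) ^ 2 / (M * xbar ^ 2)
        ≤ (x k - xbar) ^ 2 / (x k * xbar ^ 2) := by
      gcongr
      exact hxM k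
    have h3 : 2 / xbar - x k / xbar ^ 2 + (x k - xbar) ^ 2 / (x k * xbar ^ 2)
        = 1 / x k := by
      field_simp
      ring
    linarith
  set B : ℝ := 1 / xbar + σ2 / (M * xbar ^ 2) with hBdef
  have hBpos : 0 < B := by positivity
  have hSge : (N:ℝ) * B ≤ ∑ k, 1 / x k := by
    have hs := Finset.sum_le_sum (fun k (_ : k ∈ Finset.univ) => hkey k)
    have hLHS : ∑ k, (2 / xbar - x k / xbar ^ 2 + (x k - xbar) ^ 2 / (M * xbar ^ 2))
        = (N:ℝ) * (2 / xbar) - (N * xbar) / xbar ^ 2 + (N * σ2) / (M * xbar ^ 2) := by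
      rw [Finset.sum_add_distrib, Finset.sum_sub_distrib, Finset.sum_const,
        Finset.card_univ, Fintype.card_fin, ← Finset.sum_div, ← Finset.sum_div,
        hsum, hσsum]
      ring
    have heq : (N:ℝ) * (2 / xbar) - (N * xbar) / xbar ^ 2 + (N * σ2) / (M * xbar ^ 2)
        = (N:ℝ) * B := by
      rw [hBdef]; field_simp; ring
    calc (N:ℝ) * B = _ := heq.symm
      _ = _ := hLHS.symm
      _ ≤ ∑ k, 1 / x k := hs
  have hA : B ≤ 1 / xH := by
    rw [hxH]
    calc B = (1 / (N:ℝ)) * ((N:ℝ) * B) := by field_simp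
      _ ≤ (1 / (N:ℝ)) * ∑ k, 1 / x k := by
          apply mul_le_mul_of_nonneg_left hSge (by positivity)
  have hinvpos : 0 < 1 / xH := lt_of_lt_of_le hBpos hA
  have hxHpos : 0 < xH := by
    by_contra h
    push_neg at h
    have : 1 / xH ≤ 0 := by
      apply div_nonpos_of_nonneg_of_nonpos zero_le_one h
    linarith
  have hxHle : xH ≤ 1 / B := by
    have := one_div_le_one_div_of_le hBpos hA
    rwa [one_div_one_div] at this
  -- final algebra
  have hden : 0 < M * xbar + σ2 := by positivity
  have hBval : 1 / B = M * xbar ^ 2 / (M * xbar + σ2) := by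
    rw [hBdef]
    rw [div_add_div _ _ (by positivity) (by positivity), one_div_div]
    rw [div_eq_div_iff (by positivity) (by positivity)]
    ring
  have hfin : σ2 / (2 * M) ≤ xbar - 1 / B := by
    rw [hBval]
    have e : xbar - M * xbar ^ 2 / (M * xbar + σ2) = xbar * σ2 / (M * xbar + σ2) := by
      field_simp
      ring
    rw [e, div_le_div_iff₀ (by positivity) hden]
    nlinarith [mul_nonneg hσ2_nonneg (sub_nonneg.mpr hσ2M)]
  linarith
end

section
/- (Proposition 1, lower bound for equal populations) If all N parcels have the same population P_k = P0/N, then 1/OD − 1/PWD ≥ N·σ_A²/(2·A_max·P0), where σ_A² is the variance of the parcel areas and A_max is the largest parcel area. -/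
/-- Proposition 1 (lower bound for equal populations): if all `N` parcels have
the same population `P0/N > 0`, then
`1/OD − 1/PWD ≥ N·σ_A²/(2·A_max·P0)`, where `σ_A²` is the variance of the
parcel areas and `A_max` is the largest parcel area. -/
theorem od_inv_sub_pwd_inv_ge (N : ℕ) (hN : 0 < N)
    (P0 : ℝ) (hP0 : 0 < P0) (A : Fin N → ℝ) (hA : ∀ k, 0 < A k)
    (A0 OD PWD σA2 Amax : ℝ)
    (hA0 : A0 = ∑ k, A k)
    (hOD : OD = P0 / A0)
    (hPWD : PWD = ∑ k, ((P0 / N) / P0) * ((P0 / N) / A k))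
    (hσ : σA2 = (1 / (N : ℝ)) * ∑ k, (A k - A0 / N) ^ 2)
    (hAmaxub : ∀ k, A k ≤ Amax) (hAmaxmem : ∃ k, A k = Amax) :
    1 / OD - 1 / PWD ≥ N * σA2 / (2 * Amax * P0) := by
  have hNR : (0:ℝ) < N := by exact_mod_cast hN
  have hNne : (N:ℝ) ≠ 0 := ne_of_gt hNR
  -- positivity facts
  have hA0pos : 0 < A0 := by
    rw [hA0]
    exact Finset.sum_pos (fun k _ => hA k) ⟨⟨0, hN⟩, Finset.mem_univ _⟩
  have hAmaxpos : 0 < Amax := by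
    obtain ⟨k, hk⟩ := hAmaxmem
    exact hk ▸ hA k
  set bar : ℝ := A0 / N with hbar_def
  have hbarpos : 0 < bar := div_pos hA0pos hNR
  have hA0bar : A0 = N * bar := by rw [hbar_def]; field_simp
  set S : ℝ := ∑ k, (A k)⁻¹ with hS_def
  have hSpos : 0 < S := Finset.sum_pos (fun k _ => inv_pos.mpr (hA k)) ⟨⟨0, hN⟩, Finset.mem_univ _⟩
  set V : ℝ := ∑ k, (A k - bar) ^ 2 with hV_def
  have hVnn : 0 ≤ V := Finset.sum_nonneg (fun k _ => sq_nonneg _)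
  have hNσ : (N:ℝ) * σA2 = V := by rw [hσ]; field_simp
  -- key sum bound : N*bar*Amax + V ≤ bar^2*Amax*S
  have hterm : ∀ k, bar * Amax - (A k - bar) * Amax + (A k - bar) ^ 2
      ≤ bar ^ 2 * Amax * (A k)⁻¹ := by
    intro k
    rw [← div_eq_mul_inv, le_div_iff₀ (hA k)]
    nlinarith [sq_nonneg (A k - bar), hAmaxub k, hA k]
  have hsumA : ∑ k, A k = N * bar := by rw [← hA0, hA0bar]
  have hSge : N * bar * Amax + V ≤ bar ^ 2 * Amax * S := by
    calc N * bar * Amax + V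
        = ∑ k, (bar * Amax - (A k - bar) * Amax + (A k - bar) ^ 2) := by
          simp only [Finset.sum_add_distrib, Finset.sum_sub_distrib, Finset.sum_const,
            Finset.card_fin, ← Finset.sum_mul, Finset.sum_sub_distrib, hsumA]
          push_cast
          ring
      _ ≤ ∑ k, bar ^ 2 * Amax * (A k)⁻¹ := Finset.sum_le_sum (fun k _ => hterm k)
      _ = bar ^ 2 * Amax * S := by rw [hS_def, Finset.mul_sum]
  -- V ≤ N * bar * Amax
  have hVle : V ≤ N * bar * Amax := by
    have hsq : ∑ k, (A k) ^ 2 ≤ Amax * (N * bar) := by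
      rw [← hsumA, Finset.mul_sum]
      refine Finset.sum_le_sum (fun k _ => ?_)
      have := hA k
      nlinarith [hAmaxub k]
    have hVexp : V = (∑ k, (A k) ^ 2) - N * bar ^ 2 := by
      rw [hV_def]
      simp only [sub_sq, Finset.sum_add_distrib, Finset.sum_sub_distrib, Finset.sum_const,
        Finset.card_fin, ← Finset.sum_mul, ← Finset.mul_sum, hsumA]
      push_cast
      ring
    nlinarith [hbarpos]
  -- key inequality without P0
  have key2 : 2 * Amax * (N:ℝ)^2 * (bar ^ 2 * Amax) ≤ (2 * Amax * A0 - V) * S * (bar ^ 2 * Amax) := by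
    rw [hA0bar]
    have hco : 0 ≤ 2 * Amax * ((N:ℝ) * bar) - V := by nlinarith
    have h1 : (2 * Amax * ((N:ℝ) * bar) - V) * (N * bar * Amax + V)
        ≤ (2 * Amax * ((N:ℝ) * bar) - V) * (bar ^ 2 * Amax * S) :=
      mul_le_mul_of_nonneg_left hSge hco
    nlinarith [mul_nonneg hVnn (sub_nonneg.mpr hVle)]
  have key2' : 2 * Amax * (N:ℝ)^2 ≤ (2 * Amax * A0 - V) * S := by
    have hpos : 0 < bar ^ 2 * Amax := by positivity
    exact le_of_mul_le_mul_right key2 hpos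
  have key : V / (2 * Amax) ≤ A0 - (N:ℝ)^2 / S := by
    rw [sub_div' (ne_of_gt hSpos), div_le_div_iff₀ (by positivity) hSpos]
    nlinarith [key2']
  -- rewrite the goal
  have hODinv : 1 / OD = A0 / P0 := by rw [hOD, one_div_div]
  have hPWDval : PWD = P0 / N ^ 2 * S := by
    rw [hPWD, hS_def, Finset.mul_sum]
    refine Finset.sum_congr rfl (fun k _ => ?_)
    have := (hA k).ne'
    field_simp
  have hPWDinv : 1 / PWD = (N:ℝ)^2 / (P0 * S) := by
    have h2 : PWD = (P0 * S) / (N:ℝ)^2 := by rw [hPWDval]; ring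
    rw [h2, one_div_div]
  have hLHS : 1 / OD - 1 / PWD = (A0 - (N:ℝ)^2 / S) / P0 := by
    rw [hODinv, hPWDinv]
    field_simp
  have hRHS : (N:ℝ) * σA2 / (2 * Amax * P0) = (V / (2 * Amax)) / P0 := by
    rw [hNσ, div_div]
  rw [hLHS, hRHS, ge_iff_le]
  gcongr
end

section
/- (Proposition 1, zero-population case) If at least one parcel has zero population (P_j = 0 for some j) while the total population P0 is positive, then the inequality is strict: PWD > OD. -/
/-- Proposition 1 (zero-population case): if some parcel has zero population
while the total population is positive, then `PWD > OD` strictly. -/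
theorem pwd_gt_od_of_zero_population (N : ℕ) (P A : Fin N → ℝ)
    (hP : ∀ k, 0 ≤ P k) (hA : ∀ k, 0 < A k)
    (P0 A0 OD PWD : ℝ)
    (hP0 : P0 = ∑ k, P k) (hP0pos : 0 < P0)
    (hA0 : A0 = ∑ k, A k)
    (hOD : OD = P0 / A0)
    (hPWD : PWD = ∑ k, (P k / P0) * (P k / A k))
    (hzero : ∃ j, P j = 0) :
    PWD > OD := by
  obtain ⟨j, hj⟩ := hzero
  set s : Finset (Fin N) := Finset.univ.erase j with hs
  -- Q = ∑ over s of P k ^ 2 / A k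
  set Q : ℝ := ∑ k ∈ s, P k ^ 2 / A k with hQ
  have hA0pos : 0 < A0 := by
    rw [hA0]
    exact Finset.sum_pos (fun k _ => hA k) ⟨j, Finset.mem_univ j⟩
  -- P0 equals sum over s
  have hP0s : P0 = ∑ k ∈ s, P k := by
    rw [hP0, ← Finset.sum_erase Finset.univ (by simpa using hj)]
  -- Cauchy–Schwarz on s
  have hCS : P0 ^ 2 ≤ Q * ∑ k ∈ s, A k := by
    rw [hP0s, hQ]
    exact Finset.sum_sq_le_sum_mul_sum_of_sq_eq_mul s
      (fun i _ => div_nonneg (sq_nonneg _) (hA i).le)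
      (fun i _ => (hA i).le)
      (fun i _ => by rw [div_mul_cancel₀ _ (hA i).ne'])
  -- Q is positive
  have hQpos : 0 < Q := by
    obtain ⟨i, -, hi⟩ : ∃ i ∈ Finset.univ, 0 < P i := by
      by_contra h
      push_neg at h
      have : P0 ≤ 0 := by
        rw [hP0]
        exact Finset.sum_nonpos fun k hk => h k hk
      linarith
    have hisj : i ≠ j := fun h => by rw [h, hj] at hi; exact lt_irrefl 0 hi
    refine Finset.sum_pos' (fun k _ => div_nonneg (sq_nonneg _) (hA k).le)
      ⟨i, Finset.mem_erase.2 ⟨hisj, Finset.mem_univ i⟩, ?_⟩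
    exact div_pos (pow_pos hi 2) (hA i)
  -- sum of A over s is strictly less than A0
  have hAs : ∑ k ∈ s, A k < A0 := by
    rw [hA0, ← Finset.sum_erase_add Finset.univ A (Finset.mem_univ j)]
    linarith [hA j]
  have hkey : P0 ^ 2 < Q * A0 := lt_of_le_of_lt hCS (by exact mul_lt_mul_of_pos_left hAs hQpos)
  -- PWD = Q / P0
  have hPWDQ : PWD = Q / P0 := by
    rw [hPWD, hQ]
    rw [show (∑ k, (P k / P0) * (P k / A k)) = ∑ k ∈ s, (P k / P0) * (P k / A k) from
      (Finset.sum_erase Finset.univ (by simp [hj])).symm]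
    rw [Finset.sum_div]
    refine Finset.sum_congr rfl fun k _ => ?_
    field_simp
  rw [hPWDQ, hOD, gt_iff_lt, div_lt_div_iff₀ hA0pos hP0pos]
  nlinarith
end

section
/- (Boundary-shift sensitivity corollary) With the boundary shift of a population p > 0 from parcel 2 to parcel 1 (areas unchanged), if P_1/A_1 ≥ P_2/A_2 then PWD strictly increases: PWD₂ > PWD₁. Moreover PWD₂ = PWD₁ if and only if P_2/A_2 − P_1/A_1 = p/A_H, where A_H = 2A_1A_2/(A_1 + A_2). -/
/-- Boundary-shift sensitivity corollary: shifting a population `p > 0` from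
parcel `j` to parcel `i` (areas unchanged), if `P i/A i ≥ P j/A j` then the
population-weighted density strictly increases, and in general
`PWD₂ = PWD₁` if and only if `P j/A j − P i/A i = p/A_H`, where
`A_H = 2·A i·A j/(A i + A j)`. -/
theorem pwd_boundary_shift_increase (N : ℕ) (P A : Fin N → ℝ)
    (hA : ∀ k, 0 < A k)
    (P0 : ℝ) (hP0 : P0 = ∑ k, P k) (hP0pos : 0 < P0)
    (i j : Fin N) (hij : i ≠ j) (p : ℝ) (hp : 0 < p)
    (Q : Fin N → ℝ)
    (hQ : Q = fun k => if k = i then P k + p else if k = j then P k - p else P k)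
    (PWD₁ PWD₂ A_H : ℝ)
    (hPWD₁ : PWD₁ = ∑ k, (P k / P0) * (P k / A k))
    (hPWD₂ : PWD₂ = ∑ k, (Q k / P0) * (Q k / A k))
    (hAH : A_H = 2 * A i * A j / (A i + A j)) :
    (P i / A i ≥ P j / A j → PWD₂ > PWD₁) ∧
      (PWD₂ = PWD₁ ↔ P j / A j - P i / A i = p / A_H) := by
  have hAi := hA i
  have hAj := hA j
  have hAij : 0 < A i + A j := by linarith
  have hAHpos : 0 < A_H := by
    rw [hAH]; positivity
  have key : PWD₂ - PWD₁ =
      (2 * p / P0) * ((P i / A i - P j / A j) + p / A_H) := by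
    have hsum : PWD₂ - PWD₁ =
        ∑ k, ((Q k / P0) * (Q k / A k) - (P k / P0) * (P k / A k)) := by
      rw [hPWD₁, hPWD₂, Finset.sum_sub_distrib]
    have hzero : ∀ k ∈ Finset.univ, k ∉ ({i, j} : Finset (Fin N)) →
        (Q k / P0) * (Q k / A k) - (P k / P0) * (P k / A k) = 0 := by
      intro k _ hk
      simp only [Finset.mem_insert, Finset.mem_singleton, not_or] at hk
      rw [hQ]
      simp [hk.1, hk.2]
    rw [hsum, ← Finset.sum_subset (Finset.subset_univ ({i, j} : Finset (Fin N))) hzero,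
      Finset.sum_pair hij, hQ]
    simp only [if_pos rfl, if_neg hij, if_neg (Ne.symm hij)]
    rw [hAH]
    field_simp
    simp only [if_true]
    ring
  constructor
  · intro h
    have : 0 < (2 * p / P0) * ((P i / A i - P j / A j) + p / A_H) := by
      have h1 : 0 < 2 * p / P0 := by positivity
      have h2 : 0 < p / A_H := by positivity
      nlinarith
    linarith [key]
  · constructor
    · intro h
      have h0 : (2 * p / P0) * ((P i / A i - P j / A j) + p / A_H) = 0 := by
        rw [← key]; linarith
      have h1 : (2 * p / P0) ≠ 0 := by positivity
      have := mul_eq_zero.mp h0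
      rcases this with h2 | h2
      · exact absurd h2 h1
      · linarith
    · intro h
      have h0 : (P i / A i - P j / A j) + p / A_H = 0 := by linarith
      rw [h0, mul_zero] at key
      linarith
end

section
/- (Corridor model, offset-grid PWD formula) Let d, D, L, W be reals with 0 < d, 0 < D, 0 < W ≤ L/2, and set K = (D/d − 1)·(W/L)·(2 − W/L), P_1 = 25dL², P_2 = 25dL² + 100(D − d)W(L − W), P_3 = 25dL² + 50(D − d)WL. Then PWD_b = (P_1² + P_2² + 2P_3²)/((P_1 + P_2 + 2P_3)·25L²) satisfies PWD_b = d(1 + K) + d·(D/d − 1)²·(W/L)²·(2(1 − W/L)² + (W/L)²)/(1 + K). -/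
/-- Corridor model, offset-grid PWD formula: with `0 < d`, `0 < D`,
`0 < W ≤ L/2`, `K = (D/d − 1)(W/L)(2 − W/L)`, and parcel populations
`P1 = 25dL²`, `P2 = 25dL² + 100(D − d)W(L − W)`, `P3 = 25dL² + 50(D − d)WL`,
the offset-grid population-weighted density
`PWD_b = (P1² + P2² + 2P3²)/((P1 + P2 + 2P3)·25L²)` satisfies
`PWD_b = d(1 + K) + d(D/d − 1)²(W/L)²(2(1 − W/L)² + (W/L)²)/(1 + K)`. -/
theorem pwd_offset_grid_formula (d D L W K P1 P2 P3 PWDb : ℝ)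
    (hd : 0 < d) (hD : 0 < D) (hW : 0 < W) (hWL : W ≤ L / 2)
    (hK : K = (D / d - 1) * (W / L) * (2 - W / L))
    (hP1 : P1 = 25 * d * L ^ 2)
    (hP2 : P2 = 25 * d * L ^ 2 + 100 * (D - d) * W * (L - W))
    (hP3 : P3 = 25 * d * L ^ 2 + 50 * (D - d) * W * L)
    (hPWDb : PWDb = (P1 ^ 2 + P2 ^ 2 + 2 * P3 ^ 2) / ((P1 + P2 + 2 * P3) * (25 * L ^ 2))) :
    PWDb = d * (1 + K) +
      d * (D / d - 1) ^ 2 * (W / L) ^ 2 * (2 * (1 - W / L) ^ 2 + (W / L) ^ 2) / (1 + K) := by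
  have hL : 0 < L := by linarith
  have hLne : L ≠ 0 := ne_of_gt hL
  have hdne : d ≠ 0 := ne_of_gt hd
  have hKpos : 0 < 1 + K := by
    rw [hK]
    have h : 1 + (D / d - 1) * (W / L) * (2 - W / L)
        = (d * (L - W) ^ 2 + D * (W * (2 * L - W))) / (d * L ^ 2) := by
      field_simp; ring
    rw [h]
    have h2 : 0 < D * (W * (2 * L - W)) := by
      apply mul_pos hD; apply mul_pos hW; linarith
    have h1 : 0 ≤ d * (L - W) ^ 2 := by positivity
    positivity
  have hKne : 1 + K ≠ 0 := ne_of_gt hKpos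
  have hsum : P1 + P2 + 2 * P3 = 100 * d * L ^ 2 * (1 + K) := by
    rw [hP1, hP2, hP3, hK]; field_simp; ring
  have hnum : P1 ^ 2 + P2 ^ 2 + 2 * P3 ^ 2
      = 2500 * d ^ 2 * L ^ 4 * ((1 + K) ^ 2
        + (D / d - 1) ^ 2 * (W / L) ^ 2 * (2 * (1 - W / L) ^ 2 + (W / L) ^ 2)) := by
    rw [hP1, hP2, hP3, hK]; field_simp; ring
  have hrhs : d * (D / d - 1) ^ 2 * (W / L) ^ 2 * (2 * (1 - W / L) ^ 2 + (W / L) ^ 2) / (1 + K)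
      = d * ((D / d - 1) ^ 2 * (W / L) ^ 2 * (2 * (1 - W / L) ^ 2 + (W / L) ^ 2)) / (1 + K) := by
    ring
  rw [hPWDb, hsum, hnum, hrhs]
  clear hrhs hK hP1 hP2 hP3 hPWDb hsum hnum
  generalize (D / d - 1) ^ 2 * (W / L) ^ 2 * (2 * (1 - W / L) ^ 2 + (W / L) ^ 2) = F
  field_simp
  ring
end

section
/- (Corridor model, boundary dependence) With d, D, L, W real, 0 < d < D and 0 < W ≤ L/2, the PWD computed from the offset grid strictly exceeds the PWD computed from the aligned grid: PWD_b − PWD_a = (d/(1 + K))·(D/d − 1)²·(W/L)²·(2(1 − W/L)² + (W/L)²) > 0, where PWD_a = d(1 + K). -/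
/-- Corridor model, boundary dependence: with `0 < d < D` and `0 < W ≤ L/2`,
the offset-grid PWD strictly exceeds the aligned-grid PWD, with difference
`PWD_b − PWD_a = (d/(1 + K))·(D/d − 1)²·(W/L)²·(2(1 − W/L)² + (W/L)²) > 0`,
where `PWD_a = d(1 + K)`. -/
theorem pwd_offset_exceeds_aligned (d D L W K P1 P2 P3 PWDa PWDb : ℝ)
    (hd : 0 < d) (hdD : d < D) (hW : 0 < W) (hWL : W ≤ L / 2)
    (hK : K = (D / d - 1) * (W / L) * (2 - W / L))
    (hP1 : P1 = 25 * d * L ^ 2)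
    (hP2 : P2 = 25 * d * L ^ 2 + 100 * (D - d) * W * (L - W))
    (hP3 : P3 = 25 * d * L ^ 2 + 50 * (D - d) * W * L)
    (hPWDa : PWDa = d * (1 + K))
    (hPWDb : PWDb = (P1 ^ 2 + P2 ^ 2 + 2 * P3 ^ 2) / ((P1 + P2 + 2 * P3) * (25 * L ^ 2))) :
    PWDb - PWDa =
        (d / (1 + K)) * (D / d - 1) ^ 2 * (W / L) ^ 2 * (2 * (1 - W / L) ^ 2 + (W / L) ^ 2) ∧
      PWDb - PWDa > 0 := by
  have hL : 0 < L := by linarith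
  have hDd : (0:ℝ) < D / d - 1 := by
    have := (one_lt_div hd).mpr hdD; linarith
  have hWL2 : W / L < 2 := by
    rw [div_lt_iff₀ hL]; linarith
  have hWL0 : 0 < W / L := div_pos hW hL
  have hKpos : 0 < 1 + K := by
    have : 0 ≤ K := by
      rw [hK]
      exact mul_nonneg (mul_nonneg hDd.le hWL0.le) (by linarith)
    linarith
  have hK1 : (1 : ℝ) + K ≠ 0 := hKpos.ne'
  have hne : d * (1 + K) ≠ 0 := (mul_pos hd hKpos).ne'
  have heq : PWDb - PWDa =
      (d / (1 + K)) * (D / d - 1) ^ 2 * (W / L) ^ 2 * (2 * (1 - W / L) ^ 2 + (W / L) ^ 2) := by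
    have key : (PWDb - PWDa) * (d * (1 + K)) =
        ((d / (1 + K)) * (D / d - 1) ^ 2 * (W / L) ^ 2 *
          (2 * (1 - W / L) ^ 2 + (W / L) ^ 2)) * (d * (1 + K)) := by
      have hdenom : (P1 + P2 + 2 * P3) * (25 * L ^ 2) = 2500 * L ^ 4 * (d * (1 + K)) := by
        subst hP1 hP2 hP3 hK
        field_simp
        ring
      subst hPWDa hPWDb
      rw [hdenom]
      field_simp [hK1]
      subst hP1 hP2 hP3 hK
      field_simp
      ring
    exact mul_right_cancel₀ hne key
  refine ⟨heq, ?_⟩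
  rw [heq]
  have h1 : 0 < d / (1 + K) := div_pos hd hKpos
  positivity
end
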